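/- In the Bertrand game where all four firms choose prices to maximize relative profits, with c_A = c_B = c_C, the Nash equilibrium outputs are x_A = x_B = x_C = (3 b² c_D + b c_D + 4 b² c_A - 5 b c_A - 3 c_A - 7 a b² + 4 a b + 3 a) / (2 (1 - b)(b + 1)(7 b + 3)) and x_D = (3 a - 2 b² c_D - 7 b c_D - 3 c_D + 9 b² c_A + 3 b c_A - 7 a b² + 4 a b) / (2 (1 - b)(b + 1)(7 b + 3)). -/

import Mathlib

/-- Direct demand functions. -/
noncomputable def xAbert (a b pA pB pC pD : ℝ) : ℝ :=
  ((1 - b)*a + b*pD + b*pC + b*pB - 2*b*pA - pA)/((1 - b)*(3*b + 1))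
noncomputable def xBbert (a b pA pB pC pD : ℝ) : ℝ :=
  ((1 - b)*a + b*pD + b*pC - 2*b*pB - pB + b*pA)/((1 - b)*(3*b + 1))
noncomputable def xCbert (a b pA pB pC pD : ℝ) : ℝ :=
  ((1 - b)*a + b*pD - 2*b*pC - pC + b*pB + b*pA)/((1 - b)*(3*b + 1))
noncomputable def xDbert (a b pA pB pC pD : ℝ) : ℝ :=
  ((1 - b)*a - 2*b*pD - pD + b*pC + b*pB + b*pA)/((1 - b)*(3*b + 1))

noncomputable def piAbert (a b cA pA pB pC pD : ℝ) : ℝ := (pA - cA) * xAbert a b pA pB pC pD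
noncomputable def piBbert (a b cB pA pB pC pD : ℝ) : ℝ := (pB - cB) * xBbert a b pA pB pC pD
noncomputable def piCbert (a b cC pA pB pC pD : ℝ) : ℝ := (pC - cC) * xCbert a b pA pB pC pD
noncomputable def piDbert (a b cD pA pB pC pD : ℝ) : ℝ := (pD - cD) * xDbert a b pA pB pC pD

noncomputable def phiAbert (a b cA cB cC cD pA pB pC pD : ℝ) : ℝ :=
  piAbert a b cA pA pB pC pD -
    (piBbert a b cB pA pB pC pD + piCbert a b cC pA pB pC pD + piDbert a b cD pA pB pC pD)/3
noncomputable def phiBbert (a b cA cB cC cD pA pB pC pD : ℝ) : ℝ :=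
  piBbert a b cB pA pB pC pD -
    (piAbert a b cA pA pB pC pD + piCbert a b cC pA pB pC pD + piDbert a b cD pA pB pC pD)/3
noncomputable def phiCbert (a b cA cB cC cD pA pB pC pD : ℝ) : ℝ :=
  piCbert a b cC pA pB pC pD -
    (piAbert a b cA pA pB pC pD + piBbert a b cB pA pB pC pD + piDbert a b cD pA pB pC pD)/3
noncomputable def phiDbert (a b cA cB cC cD pA pB pC pD : ℝ) : ℝ :=
  piDbert a b cD pA pB pC pD -
    (piAbert a b cA pA pB pC pD + piBbert a b cB pA pB pC pD + piCbert a b cC pA pB pC pD)/3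


lemma quad_deriv (K2 K1 K0 c x : ℝ) :
    deriv (fun p => (K2*p^2 + K1*p + K0)/c) x = (2*K2*x + K1)/c := by
  have h : HasDerivAt (fun p : ℝ => (K2*p^2 + K1*p + K0)/c)
      ((K2*(↑2*x^(2-1)) + K1*1)/c) x := by
    have := ((((hasDerivAt_pow 2 x).const_mul K2).add
      (((hasDerivAt_id x).const_mul K1).add_const K0)).div_const c)
    refine (this.congr_of_eventuallyEq (Filter.Eventually.of_forall fun p => ?_)).congr_deriv ?_
    · simp [add_assoc]
    · norm_num
  rw [h.deriv]; norm_num; ring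

/-- Bertrand equilibrium (all firms choose prices, one alien): equilibrium outputs. -/
theorem bertrand_equilibrium (a b cA cB cC cD pA pB pC pD : ℝ)
    (hb0 : 0 < b) (hb1 : b < 1) (hcB : cB = cA) (hcC : cC = cA)
    (hA : deriv (fun p => phiAbert a b cA cB cC cD p pB pC pD) pA = 0)
    (hB : deriv (fun p => phiBbert a b cA cB cC cD pA p pC pD) pB = 0)
    (hC : deriv (fun p => phiCbert a b cA cB cC cD pA pB p pD) pC = 0)
    (hD : deriv (fun p => phiDbert a b cA cB cC cD pA pB pC p) pD = 0) :
    xAbert a b pA pB pC pD =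
      (3*b^2*cD + b*cD + 4*b^2*cA - 5*b*cA - 3*cA - 7*a*b^2 + 4*a*b + 3*a) /
        (2*(1 - b)*(b + 1)*(7*b + 3)) ∧
    xBbert a b pA pB pC pD =
      (3*b^2*cD + b*cD + 4*b^2*cA - 5*b*cA - 3*cA - 7*a*b^2 + 4*a*b + 3*a) /
        (2*(1 - b)*(b + 1)*(7*b + 3)) ∧
    xCbert a b pA pB pC pD =
      (3*b^2*cD + b*cD + 4*b^2*cA - 5*b*cA - 3*cA - 7*a*b^2 + 4*a*b + 3*a) /
        (2*(1 - b)*(b + 1)*(7*b + 3)) ∧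
    xDbert a b pA pB pC pD =
      (3*a - 2*b^2*cD - 7*b*cD - 3*cD + 9*b^2*cA + 3*b*cA - 7*a*b^2 + 4*a*b) /
        (2*(1 - b)*(b + 1)*(7*b + 3)) := by
  
  rw [hcB, hcC] at hA hB hC hD
  have h1 : (1:ℝ) - b > 0 := by linarith
  have hDne : ((1:ℝ) - b)*(3*b + 1) ≠ 0 := by positivity
  have hden : 3*(((1:ℝ) - b)*(3*b + 1)) ≠ 0 := by positivity
  have hR : 2*((1:ℝ) - b)*(b + 1)*(7*b + 3) ≠ 0 := by positivity
  have eA : 2*(-3*(2*b+1))*pA + (3*(((1 - b)*a + b*pB + b*pC + b*pD) + (2*b+1)*cA) - b*((pB - cA) + (pC - cA) + (pD - cD))) = 0 := by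
    have hf : (fun p => phiAbert a b cA cA cA cD p pB pC pD) = fun p =>
        ((-3*(2*b+1))*p^2 + (3*(((1 - b)*a + b*pB + b*pC + b*pD) + (2*b+1)*cA) - b*((pB - cA) + (pC - cA) + (pD - cD)))*p + (-3*cA*((1 - b)*a + b*pB + b*pC + b*pD) - ((pB - cA)*((1 - b)*a + b*pD + b*pC - 2*b*pB - pB) + (pC - cA)*((1 - b)*a + b*pD - 2*b*pC - pC + b*pB) + (pD - cD)*((1 - b)*a - 2*b*pD - pD + b*pC + b*pB))))/(3*((1 - b)*(3*b + 1))) := by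
      funext p
      simp only [phiAbert, phiBbert, phiCbert, phiDbert, piAbert, piBbert, piCbert, piDbert,
        xAbert, xBbert, xCbert, xDbert]
      field_simp
      ring
    rw [hf, quad_deriv] at hA
    exact (div_eq_zero_iff.mp hA).resolve_right hden
  have eB : 2*(-3*(2*b+1))*pB + (3*(((1 - b)*a + b*pA + b*pC + b*pD) + (2*b+1)*cA) - b*((pA - cA) + (pC - cA) + (pD - cD))) = 0 := by
    have hf : (fun p => phiBbert a b cA cA cA cD pA p pC pD) = fun p =>
        ((-3*(2*b+1))*p^2 + (3*(((1 - b)*a + b*pA + b*pC + b*pD) + (2*b+1)*cA) - b*((pA - cA) + (pC - cA) + (pD - cD)))*p + (-3*cA*((1 - b)*a + b*pA + b*pC + b*pD) - ((pA - cA)*((1 - b)*a + b*pD + b*pC - 2*b*pA - pA) + (pC - cA)*((1 - b)*a + b*pD - 2*b*pC - pC + b*pA) + (pD - cD)*((1 - b)*a - 2*b*pD - pD + b*pC + b*pA))))/(3*((1 - b)*(3*b + 1))) := by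
      funext p
      simp only [phiAbert, phiBbert, phiCbert, phiDbert, piAbert, piBbert, piCbert, piDbert,
        xAbert, xBbert, xCbert, xDbert]
      field_simp
      ring
    rw [hf, quad_deriv] at hB
    exact (div_eq_zero_iff.mp hB).resolve_right hden
  have eC : 2*(-3*(2*b+1))*pC + (3*(((1 - b)*a + b*pA + b*pB + b*pD) + (2*b+1)*cA) - b*((pA - cA) + (pB - cA) + (pD - cD))) = 0 := by
    have hf : (fun p => phiCbert a b cA cA cA cD pA pB p pD) = fun p =>
        ((-3*(2*b+1))*p^2 + (3*(((1 - b)*a + b*pA + b*pB + b*pD) + (2*b+1)*cA) - b*((pA - cA) + (pB - cA) + (pD - cD)))*p + (-3*cA*((1 - b)*a + b*pA + b*pB + b*pD) - ((pA - cA)*((1 - b)*a + b*pD + b*pB - 2*b*pA - pA) + (pB - cA)*((1 - b)*a + b*pD - 2*b*pB - pB + b*pA) + (pD - cD)*((1 - b)*a - 2*b*pD - pD + b*pB + b*pA))))/(3*((1 - b)*(3*b + 1))) := by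
      funext p
      simp only [phiAbert, phiBbert, phiCbert, phiDbert, piAbert, piBbert, piCbert, piDbert,
        xAbert, xBbert, xCbert, xDbert]
      field_simp
      ring
    rw [hf, quad_deriv] at hC
    exact (div_eq_zero_iff.mp hC).resolve_right hden
  have eD : 2*(-3*(2*b+1))*pD + (3*(((1 - b)*a + b*pA + b*pB + b*pC) + (2*b+1)*cD) - b*((pA - cA) + (pB - cA) + (pC - cA))) = 0 := by
    have hf : (fun p => phiDbert a b cA cA cA cD pA pB pC p) = fun p =>
        ((-3*(2*b+1))*p^2 + (3*(((1 - b)*a + b*pA + b*pB + b*pC) + (2*b+1)*cD) - b*((pA - cA) + (pB - cA) + (pC - cA)))*p + (-3*cD*((1 - b)*a + b*pA + b*pB + b*pC) - ((pA - cA)*((1 - b)*a + b*pC + b*pB - 2*b*pA - pA) + (pB - cA)*((1 - b)*a + b*pC - 2*b*pB - pB + b*pA) + (pC - cA)*((1 - b)*a - 2*b*pC - pC + b*pB + b*pA))))/(3*((1 - b)*(3*b + 1))) := by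
      funext p
      simp only [phiAbert, phiBbert, phiCbert, phiDbert, piAbert, piBbert, piCbert, piDbert,
        xAbert, xBbert, xCbert, xDbert]
      field_simp
      ring
    rw [hf, quad_deriv] at hD
    exact (div_eq_zero_iff.mp hD).resolve_right hden
  refine ⟨?_, ?_, ?_, ?_⟩
  · simp only [xAbert]
    rw [div_eq_div_iff hDne hR]
    linear_combination ((5*b^2+10*b+3)*(1-b)/3)*eA - (2*b*(2*b+1)*(1-b)/3)*(eB+eC+eD)
  · simp only [xBbert]
    rw [div_eq_div_iff hDne hR]
    linear_combination ((5*b^2+10*b+3)*(1-b)/3)*eB - (2*b*(2*b+1)*(1-b)/3)*(eA+eC+eD)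
  · simp only [xCbert]
    rw [div_eq_div_iff hDne hR]
    linear_combination ((5*b^2+10*b+3)*(1-b)/3)*eC - (2*b*(2*b+1)*(1-b)/3)*(eA+eB+eD)
  · simp only [xDbert]
    rw [div_eq_div_iff hDne hR]
    linear_combination ((5*b^2+10*b+3)*(1-b)/3)*eD - (2*b*(2*b+1)*(1-b)/3)*(eA+eB+eC)
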